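/- Let n ≥ 2 and define T : ℝ≥0 → ℝ≥0 by the properties: T(S) ≤ S for all S, and for S > n^{2.5}, T(S) ≤ T((1-γ)S) + T(γ(1-β)S) + T(βγ(1-α)S), where 0 < α, β, γ ≤ 1. If ε ∈ (0, 1/10) satisfies αβ > 10ε(1 + log(1/γ)) and α > 10ε(1 + log(1/β)), then T(S) ≤ n^{2.5} · (S/n^{2.5})^{1-ε} for all S, and in particular T(n^3) ≤ n^{3-ε/2}. -/

import Mathlib

open NNReal

/-- exp t ≤ 1 + 2t for t ∈ [0, 1/2]. -/
lemma my_exp_le {t : ℝ} (h0 : 0 ≤ t) (h1 : t ≤ 1/2) : Real.exp t ≤ 1 + 2*t := by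
  have ha : 1 - t ≤ Real.exp (-t) := by linarith [Real.add_one_le_exp (-t)]
  have hb : Real.exp (-t) * Real.exp t = 1 := by
    rw [← Real.exp_add]; simp
  have hc : (0:ℝ) < Real.exp t := Real.exp_pos t
  nlinarith [mul_le_mul_of_nonneg_right ha hc.le]

/-- tangent line bound: (1-x)^(1-e) ≤ 1 - x + e*x for x,e ∈ [0,1]. -/
lemma my_tangent {x e : ℝ} (hx0 : 0 ≤ x) (hx1 : x ≤ 1) (he0 : 0 ≤ e) (he1 : e ≤ 1) :
    (1 - x) ^ (1 - e) ≤ 1 - x + e * x := by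
  have h := Real.geom_mean_le_arith_mean2_weighted (by linarith : (0:ℝ) ≤ 1 - e) he0
    (by linarith : (0:ℝ) ≤ 1 - x) (zero_le_one) (by ring)
  rw [Real.one_rpow, mul_one] at h
  nlinarith [h]

/-- x^(1-e) ≤ x (1 + 2 e log(1/x)) when 0<x≤1, 0≤e, e·log(1/x) ≤ 1/2. -/
lemma my_powmul {x e : ℝ} (hx0 : 0 < x) (hx1 : x ≤ 1) (he0 : 0 ≤ e)
    (hL : e * Real.log (1/x) ≤ 1/2) :
    x ^ (1 - e) ≤ x * (1 + 2 * (e * Real.log (1/x))) := by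
  have hLx : Real.log (1/x) = -Real.log x := by rw [one_div, Real.log_inv]
  have hL0 : 0 ≤ Real.log (1/x) := Real.log_nonneg (by rw [le_div_iff₀ hx0]; linarith)
  have : x ^ (1 - e) = x * Real.exp (e * Real.log (1/x)) := by
    rw [Real.rpow_def_of_pos hx0, hLx]
    rw [show Real.log x * (1 - e) = Real.log x + e * (-Real.log x) by ring, Real.exp_add,
      Real.exp_log hx0]
  rw [this]
  have := my_exp_le (mul_nonneg he0 hL0) hL
  exact mul_le_mul_of_nonneg_left this hx0.le

set_option maxHeartbeats 1000000 in
lemma my_key_real {α β γ ε : ℝ} (hα0 : 0 < α) (hα1 : α ≤ 1) (hβ0 : 0 < β) (hβ1 : β ≤ 1)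
    (hγ0 : 0 < γ) (hγ1 : γ ≤ 1) (hε0 : 0 < ε)
    (h1 : α * β > 10 * ε * (1 + Real.log (1 / γ)))
    (h2 : α > 10 * ε * (1 + Real.log (1 / β))) :
    (1 - γ) ^ (1 - ε) + (γ * (1 - β)) ^ (1 - ε) + (β * γ * (1 - α)) ^ (1 - ε) ≤ 1 := by
  set Lγ := Real.log (1/γ) with hLγ
  set Lβ := Real.log (1/β) with hLβ
  have hLγ0 : 0 ≤ Lγ := Real.log_nonneg (by rw [le_div_iff₀ hγ0]; linarith)
  have hLβ0 : 0 ≤ Lβ := Real.log_nonneg (by rw [le_div_iff₀ hβ0]; linarith)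
  have hαβ1 : α * β ≤ 1 := by nlinarith
  have e1 : ε + ε * Lγ ≤ α * β / 10 := by nlinarith
  have e2 : ε + ε * Lβ ≤ α / 10 := by nlinarith
  have hε10 : ε ≤ 1/10 := by nlinarith
  have hεLγ : ε * Lγ ≤ 1/2 := by nlinarith
  have hεLβγ : ε * (Lβ + Lγ) ≤ 1/2 := by nlinarith
  -- log of product
  have hlogprod : Real.log (1/(β*γ)) = Lβ + Lγ := by
    rw [hLβ, hLγ, ← Real.log_mul (by positivity) (by positivity)]
    congr 1; field_simp
  have hA : (1 - γ) ^ (1 - ε) ≤ 1 - γ + ε * γ := my_tangent hγ0.le hγ1 hε0.le (by linarith)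
  have hB : (1 - β) ^ (1 - ε) ≤ 1 - β + ε * β := my_tangent hβ0.le hβ1 hε0.le (by linarith)
  have hC : (1 - α) ^ (1 - ε) ≤ 1 - α + ε * α := my_tangent hα0.le hα1 hε0.le (by linarith)
  have hG : γ ^ (1 - ε) ≤ γ * (1 + 2 * (ε * Lγ)) := my_powmul hγ0 hγ1 hε0.le hεLγ
  have hBG : (β*γ) ^ (1 - ε) ≤ (β*γ) * (1 + 2 * (ε * (Lβ + Lγ))) := by
    have := my_powmul (x := β*γ) (by positivity) (by nlinarith) hε0.le
      (by rw [hlogprod]; exact hεLβγ)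
    rwa [hlogprod] at this
  have split2 : (γ * (1 - β)) ^ (1 - ε) = γ ^ (1-ε) * (1 - β) ^ (1-ε) :=
    Real.mul_rpow hγ0.le (by linarith)
  have split3 : (β * γ * (1 - α)) ^ (1 - ε) = (β*γ) ^ (1-ε) * (1 - α) ^ (1-ε) :=
    Real.mul_rpow (by positivity) (by linarith)
  have t2 : (γ * (1 - β)) ^ (1 - ε) ≤ γ * (1 + 2 * (ε * Lγ)) * (1 - β + ε * β) := by
    rw [split2]
    exact mul_le_mul hG hB (Real.rpow_nonneg (by linarith) _)
      (mul_nonneg hγ0.le (by nlinarith [mul_nonneg hε0.le hLγ0]))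
  have t3 : (β * γ * (1 - α)) ^ (1 - ε) ≤
      (β*γ) * (1 + 2 * (ε * (Lβ + Lγ))) * (1 - α + ε * α) := by
    rw [split3]
    exact mul_le_mul hBG hC (Real.rpow_nonneg (by linarith) _)
      (mul_nonneg (by positivity) (by nlinarith [mul_nonneg hε0.le (by linarith : (0:ℝ) ≤ Lβ + Lγ)]))
  -- now the polynomial part
  have hb1 : 1 - β + ε * β ≤ 1 := by nlinarith
  have hb2 : 1 - α + ε * α ≤ 1 := by nlinarith
  have u2 : γ * (1 + 2 * (ε * Lγ)) * (1 - β + ε * β) ≤ γ*(1-β) + γ*ε*β + 2*γ*ε*Lγ := by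
    nlinarith [mul_nonneg (mul_nonneg hγ0.le hε0.le) hLγ0, mul_nonneg hγ0.le hε0.le]
  have u3 : (β*γ) * (1 + 2 * (ε * (Lβ + Lγ))) * (1 - α + ε * α) ≤
      β*γ*(1-α) + β*γ*ε*α + 2*β*γ*ε*(Lβ+Lγ) := by
    nlinarith [mul_nonneg (mul_nonneg (mul_nonneg hβ0.le hγ0.le) hε0.le) (by linarith : (0:ℝ) ≤ Lβ + Lγ),
      mul_nonneg (mul_nonneg hβ0.le hγ0.le) hε0.le]
  -- bracket bound: ε + ε*β + 2*ε*Lγ + β*ε*α + 2*β*ε*Lβ + 2*β*ε*Lγ ≤ α*β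
  have bracket : ε + ε*β + 2*ε*Lγ + β*ε*α + 2*β*ε*Lβ + 2*β*ε*Lγ ≤ α*β := by
    have q1 : 2*(ε + ε*Lγ) ≤ α*β/5 := by linarith
    have q2 : 2*β*(ε + ε*Lβ) ≤ β*(α/5) := by nlinarith
    have q3 : 2*β*ε*Lγ ≤ 2*ε*Lγ := by nlinarith [mul_nonneg hε0.le hLγ0]
    have q4 : ε*β ≤ α*β/10 := by nlinarith
    have q5 : β*ε*α ≤ α*β/10 := by nlinarith
    nlinarith [mul_nonneg hε0.le hLγ0]
  have brγ := mul_le_mul_of_nonneg_left bracket hγ0.le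
  linarith [hA, t2, t3, u2, u3, brγ]

lemma my_key_nnreal {α β γ ε : ℝ≥0} (hα0 : 0 < α) (hα1 : α ≤ 1) (hβ0 : 0 < β) (hβ1 : β ≤ 1)
    (hγ0 : 0 < γ) (hγ1 : γ ≤ 1) (hε0 : 0 < ε)
    (h1 : (α : ℝ) * β > 10 * ε * (1 + Real.log (1 / (γ : ℝ))))
    (h2 : (α : ℝ) > 10 * ε * (1 + Real.log (1 / (β : ℝ)))) :
    (1 - γ) ^ (1 - (ε:ℝ)) + (γ * (1 - β)) ^ (1 - (ε:ℝ)) + (β * γ * (1 - α)) ^ (1 - (ε:ℝ))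
      ≤ (1 : ℝ≥0) := by
  rw [← NNReal.coe_le_coe]
  push_cast [NNReal.coe_rpow, NNReal.coe_sub hγ1, NNReal.coe_sub hβ1, NNReal.coe_sub hα1]
  exact my_key_real hα0 hα1 hβ0 hβ1 hγ0 hγ1 hε0 h1 h2

theorem recurrence_bound (n : ℝ≥0) (hn : 2 ≤ n) (α β γ ε : ℝ≥0)
    (hα0 : 0 < α) (hα1 : α ≤ 1) (hβ0 : 0 < β) (hβ1 : β ≤ 1)
    (hγ0 : 0 < γ) (hγ1 : γ ≤ 1) (hε0 : 0 < ε) (hε1 : (ε : ℝ) < 1/10)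
    (h1 : (α : ℝ) * β > 10 * ε * (1 + Real.log (1 / (γ : ℝ))))
    (h2 : (α : ℝ) > 10 * ε * (1 + Real.log (1 / (β : ℝ))))
    (T : ℝ≥0 → ℝ≥0)
    (hT1 : ∀ S, T S ≤ S)
    (hT2 : ∀ S, n ^ (2.5 : ℝ) < S →
      T S ≤ T ((1 - γ) * S) + T (γ * (1 - β) * S) + T (β * γ * (1 - α) * S)) :
    (∀ S, T S ≤ n ^ (2.5 : ℝ) * (S / n ^ (2.5 : ℝ)) ^ (1 - (ε : ℝ)))
      ∧ T (n ^ (3 : ℝ)) ≤ n ^ (3 - (ε : ℝ) / 2) := by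
  have key3 := my_key_nnreal hα0 hα1 hβ0 hβ1 hγ0 hγ1 hε0 h1 h2
  set N : ℝ≥0 := n ^ (2.5 : ℝ) with hN
  have hn0 : (0:ℝ≥0) < n := lt_of_lt_of_le two_pos hn
  have hN0 : 0 < N := NNReal.rpow_pos hn0
  have hεR0 : (0:ℝ) ≤ (ε:ℝ) := ε.coe_nonneg
  have hδ1 : (1:ℝ) - (ε:ℝ) ≤ 1 := by linarith
  -- base case
  have base : ∀ S, S ≤ N → T S ≤ N * (S / N) ^ (1 - (ε:ℝ)) := by
    intro S hS
    rcases eq_or_ne S 0 with rfl | hS0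
    · exact le_trans (hT1 0) zero_le
    · refine (hT1 S).trans ?_
      have hx0 : 0 < S / N := div_pos (pos_iff_ne_zero.mpr hS0) hN0
      have hx1 : S / N ≤ 1 := (div_le_one hN0).mpr hS
      calc S = N * (S / N) := by rw [mul_comm, div_mul_cancel₀ _ hN0.ne']
        _ ≤ N * (S / N) ^ (1 - (ε:ℝ)) := by
            refine mul_le_mul_right ?_ N
            calc S / N = (S / N) ^ (1:ℝ) := (NNReal.rpow_one _).symm
              _ ≤ (S / N) ^ (1 - (ε:ℝ)) :=
                  NNReal.rpow_le_rpow_of_exponent_ge hx0 hx1 hδ1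
  -- the shrink factor
  set q : ℝ≥0 := max (1 - γ) (max (1 - β) (1 - α)) with hq
  have hq1 : q < 1 := by
    apply max_lt (tsub_lt_self one_pos hγ0)
    exact max_lt (tsub_lt_self one_pos hβ0) (tsub_lt_self one_pos hα0)
  have main : ∀ k : ℕ, ∀ S : ℝ≥0, S * q ^ k ≤ N → T S ≤ N * (S / N) ^ (1 - (ε:ℝ)) := by
    intro k
    induction k with
    | zero => intro S h; exact base S (by simpa using h)
    | succ k ih =>
      intro S h
      rcases le_or_gt S N with hSN | hSN
      · exact base S hSN
      · have child : ∀ f : ℝ≥0, f ≤ q →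
            T (f * S) ≤ N * (f ^ (1 - (ε:ℝ)) * (S / N) ^ (1 - (ε:ℝ))) := by
          intro f hf
          have hk : f * S * q ^ k ≤ N := by
            calc f * S * q ^ k ≤ q * S * q ^ k := by gcongr
              _ = S * q ^ (k+1) := by ring
              _ ≤ N := h
          calc T (f * S) ≤ N * (f * S / N) ^ (1 - (ε:ℝ)) := ih (f * S) hk
            _ = N * (f ^ (1 - (ε:ℝ)) * (S / N) ^ (1 - (ε:ℝ))) := by
                rw [mul_div_assoc, NNReal.mul_rpow]
        have c1 := child (1 - γ) (le_max_left _ _)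
        have c2 := child (γ * (1 - β))
          (le_trans (mul_le_of_le_one_left zero_le hγ1)
            (le_trans (le_max_left _ _) (le_max_right _ _)))
        have c3 := child (β * γ * (1 - α))
          (le_trans (mul_le_of_le_one_left zero_le (mul_le_one' hβ1 hγ1))
            (le_trans (le_max_right _ _) (le_max_right _ _)))
        calc T S ≤ T ((1 - γ) * S) + T (γ * (1 - β) * S) + T (β * γ * (1 - α) * S) :=
              hT2 S hSN
          _ ≤ N * ((1-γ) ^ (1-(ε:ℝ)) * (S/N) ^ (1-(ε:ℝ)))
              + N * ((γ*(1-β)) ^ (1-(ε:ℝ)) * (S/N) ^ (1-(ε:ℝ)))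
              + N * ((β*γ*(1-α)) ^ (1-(ε:ℝ)) * (S/N) ^ (1-(ε:ℝ))) :=
                add_le_add (add_le_add c1 c2) c3
          _ = ((1-γ) ^ (1-(ε:ℝ)) + (γ*(1-β)) ^ (1-(ε:ℝ)) + (β*γ*(1-α)) ^ (1-(ε:ℝ)))
              * (N * (S/N) ^ (1-(ε:ℝ))) := by ring
          _ ≤ 1 * (N * (S/N) ^ (1-(ε:ℝ))) := mul_le_mul' key3 le_rfl
          _ = N * (S/N) ^ (1-(ε:ℝ)) := one_mul _
  have part1 : ∀ S, T S ≤ N * (S / N) ^ (1 - (ε:ℝ)) := by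
    intro S
    rcases le_or_gt S N with hS | hS
    · exact base S hS
    · have hS0 : 0 < S := lt_trans hN0 hS
      obtain ⟨k, hk⟩ := _root_.exists_pow_lt_of_lt_one (div_pos hN0 hS0) hq1
      refine main k S ?_
      calc S * q ^ k ≤ S * (N / S) := mul_le_mul_right hk.le S
        _ = N := by rw [mul_comm, div_mul_cancel₀ _ hS0.ne']
  refine ⟨part1, ?_⟩
  calc T (n ^ (3:ℝ)) ≤ N * (n ^ (3:ℝ) / N) ^ (1 - (ε:ℝ)) := part1 _
    _ = n ^ (3 - (ε:ℝ)/2) := by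
        rw [hN, ← NNReal.rpow_sub hn0.ne']
        rw [show (3:ℝ) - 2.5 = 0.5 by norm_num, ← NNReal.rpow_mul,
          ← NNReal.rpow_add hn0.ne']
        congr 1
        ring
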